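/- arXiv:2309.09059 — 2 statements merged into one kernel-verified Lean document; each statement's English description precedes it below -/
import Mathlib

section
/- Let 1 < p < 2 and let Z₁,…,Zₙ be independent random variables with |Zᵢ| ≤ bᵢ almost surely, where b = (b₁,…,bₙ) ∈ ℝⁿ is a vector of nonnegative bounds. Set aᵢ = E Zᵢ and a = (1/n)∑ᵢ aᵢ. Then for every ε > 0, P(|(1/n)∑ᵢ₌₁ⁿ Zᵢ − a| > ε) ≤ 2·exp(−(1/2)·(n·ε / (3‖b‖_p))^{p/(p−1)}), where ‖b‖_p = (∑ᵢ bᵢ^p)^{1/p}. -/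
open MeasureTheory ProbabilityTheory Finset Real


lemma g_pos (m u : ℝ) (hm : |m| ≤ 1) : 0 < cosh u + m * sinh u := by
  have h1 : |m * sinh u| ≤ |sinh u| := by
    rw [abs_mul]; nlinarith [abs_nonneg (sinh u)]
  have h2 : |sinh u| < cosh u := by
    rw [abs_sinh, ← cosh_abs u]; exact sinh_lt_cosh _
  have := neg_abs_le (m * sinh u)
  linarith

lemma hoeff_scalar (m u : ℝ) (hm : |m| ≤ 1) :
    cosh u + m * sinh u ≤ exp (m * u + u ^ 2 / 2) := by
  set g : ℝ → ℝ := fun v => cosh v + m * sinh v with hg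
  have hgpos : ∀ v, 0 < g v := fun v => g_pos m v hm
  set g' : ℝ → ℝ := fun v => sinh v + m * cosh v with hg'
  have hgd : ∀ v, HasDerivAt g (g' v) v := fun v => by
    exact ((Real.hasDerivAt_cosh v).add
      ((Real.hasDerivAt_sinh v).const_mul m))
  have hgd' : ∀ v, HasDerivAt g' (g v) v := fun v => by
    exact ((Real.hasDerivAt_sinh v).add
      ((Real.hasDerivAt_cosh v).const_mul m))
  set F : ℝ → ℝ := fun v => m + v - g' v / g v with hF
  have hFd : ∀ v, HasDerivAt F (1 - (g v * g v - g' v * g' v) / (g v) ^ 2) v := fun v => by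
    have hdiv : HasDerivAt (fun w => g' w / g w)
        ((g v * g v - g' v * g' v) / (g v) ^ 2) v :=
      (hgd' v).div (hgd v) (hgpos v).ne'
    exact ((hasDerivAt_id v).const_add m).sub hdiv
  have hF0 : F 0 = 0 := by simp [hF, hg, hg']
  have hFnonneg : ∀ v, 0 ≤ 1 - (g v * g v - g' v * g' v) / (g v) ^ 2 := fun v => by
    rw [sub_nonneg, div_le_one (pow_pos (hgpos v) 2)]
    nlinarith [sq_nonneg (g' v)]
  have hFmono : Monotone F :=
    monotone_of_deriv_nonneg (fun v => (hFd v).differentiableAt) (fun v => by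
      rw [(hFd v).deriv]; exact hFnonneg v)
  set D : ℝ → ℝ := fun v => m * v + v ^ 2 / 2 - log (g v) with hD
  have hDd : ∀ v, HasDerivAt D (F v) v := fun v => by
    have hlog : HasDerivAt (fun w => log (g w)) (g' v / g v) v := by
      simpa using (hgd v).log (hgpos v).ne'
    have h1 : HasDerivAt (fun w => m * w + w ^ 2 / 2) (m + v) v := by
      have := ((hasDerivAt_id v).const_mul m).add
        (((hasDerivAt_id v).pow 2).div_const 2)
      exact (by simpa [mul_comm] using this : HasDerivAt ((fun y => m * y) + fun x => x ^ 2 / 2) (m + v) v)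
    exact h1.sub hlog
  have hD0 : D 0 = 0 := by simp [hD, hg]
  have key : 0 ≤ D u := by
    rcases le_or_gt 0 u with h | h
    · have : MonotoneOn D (Set.Ici 0) := by
        refine monotoneOn_of_deriv_nonneg (convex_Ici 0)
          (fun v _ => (hDd v).continuousAt.continuousWithinAt)
          (fun v _ => (hDd v).differentiableAt.differentiableWithinAt) (fun v hv => ?_)
        · rw [(hDd v).deriv]
          rw [interior_Ici] at hv
          calc (0:ℝ) = F 0 := hF0.symm
            _ ≤ F v := hFmono (le_of_lt hv)
      have := this Set.self_mem_Ici (Set.mem_Ici.2 h) h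
      linarith [hD0]
    · have : AntitoneOn D (Set.Iic 0) := by
        refine antitoneOn_of_deriv_nonpos (convex_Iic 0)
          (fun v _ => (hDd v).continuousAt.continuousWithinAt)
          (fun v _ => (hDd v).differentiableAt.differentiableWithinAt) (fun v hv => ?_)
        · rw [(hDd v).deriv]
          rw [interior_Iic] at hv
          calc F v ≤ F 0 := hFmono (le_of_lt hv)
            _ = 0 := hF0
      have := this (Set.mem_Iic.2 h.le) Set.self_mem_Iic h.le
      linarith [hD0]
  have hlog_le : log (g u) ≤ m * u + u ^ 2 / 2 := by
    simpa [hD, sub_nonneg] using key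
  show g u ≤ exp (m * u + u ^ 2 / 2)
  calc g u = exp (log (g u)) := (exp_log (hgpos u)).symm
    _ ≤ exp (m * u + u ^ 2 / 2) := exp_le_exp.2 hlog_le

lemma exp_le_chord {x c t : ℝ} (hc : 0 < c) (hx : |x| ≤ c) :
    exp (t * x) ≤ cosh (t * c) + (x / c) * sinh (t * c) := by
  have hx1 : -c ≤ x := (abs_le.1 hx).1
  have hx2 : x ≤ c := (abs_le.1 hx).2
  have hl : (0:ℝ) ≤ (c - x) / (2 * c) := div_nonneg (by linarith) (by positivity)
  have hr : (0:ℝ) ≤ (c + x) / (2 * c) := div_nonneg (by linarith) (by positivity)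
  have hsum : (c - x) / (2 * c) + (c + x) / (2 * c) = 1 := by field_simp; ring
  have hcomb : t * x = ((c - x) / (2 * c)) * (-(t * c)) + ((c + x) / (2 * c)) * (t * c) := by
    field_simp; ring
  have := convexOn_exp.2 (Set.mem_univ (-(t * c))) (Set.mem_univ (t * c)) hl hr hsum
  rw [smul_eq_mul, smul_eq_mul, smul_eq_mul, smul_eq_mul] at this
  rw [hcomb]
  refine this.trans (le_of_eq ?_)
  rw [Real.cosh_eq, Real.sinh_eq, Real.exp_neg]
  field_simp
  ring

lemma mgf_le_of_bounded {Ω : Type*} [MeasureSpace Ω] [IsProbabilityMeasure (volume : Measure Ω)]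
    {X : Ω → ℝ} {c : ℝ} (t : ℝ) (hc : 0 ≤ c) (hX : Measurable X) (hb : ∀ᵐ ω, |X ω| ≤ c) :
    mgf X volume t ≤ exp (t * (∫ ω, X ω) + t ^ 2 * c ^ 2 / 2) := by
  have hXint : Integrable X volume := by
    refine Integrable.mono' (integrable_const c) hX.aestronglyMeasurable ?_
    filter_upwards [hb] with ω h using by simpa using h
  have hexpint : Integrable (fun ω => exp (t * X ω)) volume := by
    refine Integrable.mono' (integrable_const (exp (|t| * c))) 
      ((hX.const_mul t).exp).aestronglyMeasurable ?_
    filter_upwards [hb] with ω h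
    rw [Real.norm_eq_abs, abs_exp, exp_le_exp]
    calc t * X ω ≤ |t * X ω| := le_abs_self _
      _ = |t| * |X ω| := abs_mul _ _
      _ ≤ |t| * c := by gcongr
  rcases eq_or_lt_of_le hc with hc0 | hc0
  · -- c = 0, X = 0 a.e.
    have hX0 : ∀ᵐ ω, X ω = 0 := by
      filter_upwards [hb] with ω h
      rw [← hc0] at h; exact abs_eq_zero.1 (le_antisymm h (abs_nonneg _))
    have h1 : mgf X volume t = 1 := by
      rw [mgf]
      rw [integral_congr_ae (g := fun _ => (1:ℝ)) (by filter_upwards [hX0] with ω h; simp [h])]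
      simp
    have h2 : (∫ ω, X ω) = 0 := by
      rw [integral_congr_ae (g := fun _ => (0:ℝ)) hX0]; simp
    rw [h1, h2, ← hc0]
    simp
  · set a := ∫ ω, X ω with ha
    have hac : |a| ≤ c := by
      calc |a| ≤ ∫ ω, |X ω| := by
            simpa [Real.norm_eq_abs] using norm_integral_le_integral_norm (μ := volume) X
        _ ≤ ∫ _ω, c := integral_mono_ae hXint.abs (integrable_const c) hb
        _ = c := by simp
    have step1 : mgf X volume t ≤ cosh (t * c) + (a / c) * sinh (t * c) := by
      rw [mgf]
      have hle : ∀ᵐ ω, exp (t * X ω) ≤ cosh (t * c) + (X ω / c) * sinh (t * c) := by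
        filter_upwards [hb] with ω h using exp_le_chord hc0 h
      calc (∫ ω, exp (t * X ω)) ≤ ∫ ω, (cosh (t * c) + (X ω / c) * sinh (t * c)) := by
            refine integral_mono_ae hexpint ?_ hle
            exact (integrable_const _).add (((hXint.div_const c)).mul_const _)
        _ = cosh (t * c) + (a / c) * sinh (t * c) := by
            rw [integral_add (integrable_const _) ((hXint.div_const c).mul_const _)]
            rw [integral_mul_const, integral_div]
            simp [ha]
    refine step1.trans ?_
    have hm : |a / c| ≤ 1 := by
      rw [abs_div, abs_of_pos hc0, div_le_one hc0]; exact hac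
    have := hoeff_scalar (a / c) (t * c) hm
    refine this.trans (le_of_eq ?_)
    congr 1
    field_simp

lemma hoeffding_one_sided {Ω : Type*} [MeasureSpace Ω] [IsProbabilityMeasure (volume : Measure Ω)]
    {n : ℕ} (Z : Fin n → Ω → ℝ) (b : Fin n → ℝ) (hb : ∀ i, 0 ≤ b i)
    (hZmeas : ∀ i, Measurable (Z i))
    (hindep : iIndepFun Z volume)
    (hbound : ∀ i, ∀ᵐ ω, |Z i ω| ≤ b i)
    (s : Finset (Fin n)) (lam V : ℝ) (hlam : 0 ≤ lam)
    (hV : ∑ i ∈ s, b i ^ 2 ≤ V) (hVpos : 0 < V) :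
    (volume {ω | lam + ∑ i ∈ s, (∫ ω', Z i ω') ≤ ∑ i ∈ s, Z i ω}).toReal ≤
      exp (-lam ^ 2 / (2 * V)) := by
  set t0 : ℝ := lam / V with ht0
  have ht0nn : 0 ≤ t0 := div_nonneg hlam hVpos.le
  have hint : ∀ i, Integrable (fun ω => exp (t0 * Z i ω)) volume := by
    intro i
    refine Integrable.mono' (integrable_const (exp (|t0| * b i)))
      (((hZmeas i).const_mul t0).exp).aestronglyMeasurable ?_
    filter_upwards [hbound i] with ω h
    rw [Real.norm_eq_abs, abs_exp, exp_le_exp]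
    calc t0 * Z i ω ≤ |t0 * Z i ω| := le_abs_self _
      _ = |t0| * |Z i ω| := abs_mul _ _
      _ ≤ |t0| * b i := by gcongr
  have hintsum : Integrable (fun ω => exp (t0 * (∑ i ∈ s, Z i) ω)) volume :=
    hindep.integrable_exp_mul_sum hZmeas (fun i _ => hint i)
  have hchern := measure_ge_le_exp_mul_mgf (μ := volume)
    (X := ∑ i ∈ s, Z i) (lam + ∑ i ∈ s, (∫ ω', Z i ω')) ht0nn hintsum
  have hset : {ω | lam + ∑ i ∈ s, (∫ ω', Z i ω') ≤ ∑ i ∈ s, Z i ω} =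
      {ω | lam + ∑ i ∈ s, (∫ ω', Z i ω') ≤ (∑ i ∈ s, Z i) ω} := by
    ext ω; simp [Finset.sum_apply]
  rw [hset]
  refine hchern.trans ?_
  have hmgf : mgf (∑ i ∈ s, Z i) volume t0 ≤
      exp (t0 * ∑ i ∈ s, (∫ ω', Z i ω') + t0 ^ 2 * V / 2) := by
    rw [hindep.mgf_sum hZmeas]
    have hterm : ∀ i ∈ s, mgf (Z i) volume t0 ≤
        exp (t0 * (∫ ω', Z i ω') + t0 ^ 2 * (b i) ^ 2 / 2) := fun i _ =>
      mgf_le_of_bounded t0 (hb i) (hZmeas i) (hbound i)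
    calc ∏ i ∈ s, mgf (Z i) volume t0
        ≤ ∏ i ∈ s, exp (t0 * (∫ ω', Z i ω') + t0 ^ 2 * (b i) ^ 2 / 2) :=
          Finset.prod_le_prod (fun i _ => mgf_nonneg) hterm
      _ = exp (∑ i ∈ s, (t0 * (∫ ω', Z i ω') + t0 ^ 2 * (b i) ^ 2 / 2)) := by
          rw [Real.exp_sum]
      _ ≤ exp (t0 * ∑ i ∈ s, (∫ ω', Z i ω') + t0 ^ 2 * V / 2) := by
          rw [exp_le_exp, Finset.sum_add_distrib, ← Finset.mul_sum]
          rw [show ∀ c : ℝ, ∀ f : Fin n → ℝ, ∑ i ∈ s, c * f i ^ 2 / 2 = c * (∑ i ∈ s, f i ^ 2) / 2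
            from fun c f => by rw [← Finset.sum_div, ← Finset.mul_sum]]
          have : t0 ^ 2 * (∑ i ∈ s, b i ^ 2) / 2 ≤ t0 ^ 2 * V / 2 := by
            apply div_le_div_of_nonneg_right ?_ (by norm_num)
            exact mul_le_mul_of_nonneg_left hV (sq_nonneg t0)
          linarith
  calc exp (-t0 * (lam + ∑ i ∈ s, (∫ ω', Z i ω'))) * mgf (∑ i ∈ s, Z i) volume t0
      ≤ exp (-t0 * (lam + ∑ i ∈ s, (∫ ω', Z i ω'))) *
        exp (t0 * ∑ i ∈ s, (∫ ω', Z i ω') + t0 ^ 2 * V / 2) := by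
        exact mul_le_mul_of_nonneg_left hmgf (exp_nonneg _)
    _ = exp (-t0 * lam + t0 ^ 2 * V / 2) := by rw [← Real.exp_add]; ring_nf
    _ = exp (-lam ^ 2 / (2 * V)) := by
        congr 1
        rw [ht0]
        field_simp
        ring

lemma keyineq {r : ℝ} (hr : 0 < r) :
    (2 * (r + 2) / (3 * r)) ^ r ≤ 36 / (r + 2) ^ 2 := by
  have hbase : 0 < 2 * (r + 2) / (3 * r) := by positivity
  have hlog : log (2 * (r + 2) / (3 * r)) ≤ (4 - r) / (3 * r) := by
    have := log_le_sub_one_of_pos hbase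
    have h : 2 * (r + 2) / (3 * r) - 1 = (4 - r) / (3 * r) := by field_simp; ring
    linarith [h ▸ this]
  have h1 : (2 * (r + 2) / (3 * r)) ^ r = exp (r * log (2 * (r + 2) / (3 * r))) := by
    rw [rpow_def_of_pos hbase, mul_comm]
  rw [h1]
  have h2 : r * log (2 * (r + 2) / (3 * r)) ≤ (4 - r) / 3 := by
    calc r * log (2 * (r + 2) / (3 * r)) ≤ r * ((4 - r) / (3 * r)) := by
          exact mul_le_mul_of_nonneg_left hlog hr.le
      _ = (4 - r) / 3 := by field_simp
  refine (exp_le_exp.2 h2).trans ?_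
  -- exp ((4-r)/3) ≤ 36/(r+2)^2  ⇔  (r+2)^2/36 ≤ exp ((r-4)/3)
  have h3 : (r + 2) / 6 ≤ exp ((r - 4) / 6) := by
    have := Real.add_one_le_exp ((r - 4) / 6)
    calc (r + 2) / 6 = (r - 4) / 6 + 1 := by ring
      _ ≤ exp ((r - 4) / 6) := this
  have h4 : ((r + 2) / 6) ^ 2 ≤ exp ((r - 4) / 3) := by
    calc ((r + 2) / 6) ^ 2 ≤ (exp ((r - 4) / 6)) ^ 2 := by
          have h0 : (0:ℝ) ≤ (r + 2) / 6 := by positivity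
          exact pow_le_pow_left₀ h0 h3 2
      _ = exp ((r - 4) / 3) := by rw [← Real.exp_nat_mul]; ring_nf
  have h5 : exp ((4 - r) / 3) = (exp ((r - 4) / 3))⁻¹ := by
    rw [← Real.exp_neg]; ring_nf
  rw [h5]
  rw [inv_le_iff_one_le_mul₀ (exp_pos _)]
  have h6 : ((r+2)/6)^2 * (36 / (r+2)^2) = 1 := by field_simp; ring
  calc (1:ℝ) = ((r+2)/6)^2 * (36 / (r+2)^2) := h6.symm
    _ ≤ exp ((r - 4) / 3) * (36 / (r+2)^2) := by
        refine mul_le_mul_of_nonneg_right h4 (by positivity)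
    _ = 36 / (r+2)^2 * exp ((r - 4) / 3) := by ring

/-- ℓ_p-norm Hoeffding-type inequality: for `1 < p < 2`, independent random
variables `Zᵢ` with `|Zᵢ| ≤ bᵢ` a.s., means `aᵢ = E Zᵢ`, `a = (1/n)∑ aᵢ`, and
`ε > 0`, `P(|(1/n)∑ Zᵢ − a| > ε) ≤ 2 exp(−(1/2)(nε/(3‖b‖_p))^{p/(p−1)})`. -/
theorem stmt2 {Ω : Type*} [MeasureSpace Ω] [IsProbabilityMeasure (volume : Measure Ω)]
    (p : ℝ) (hp1 : 1 < p) (hp2 : p < 2) (n : ℕ) (hn : 0 < n)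
    (Z : Fin n → Ω → ℝ) (b : Fin n → ℝ) (hb : ∀ i, 0 ≤ b i)
    (hZmeas : ∀ i, Measurable (Z i))
    (hindep : iIndepFun Z volume)
    (hbound : ∀ i, ∀ᵐ ω, |Z i ω| ≤ b i)
    (a : Fin n → ℝ) (ha : ∀ i, a i = ∫ ω, Z i ω)
    (ε : ℝ) (hε : 0 < ε) :
    (volume {ω | |(1 / (n : ℝ)) * ∑ i, Z i ω - (1 / (n : ℝ)) * ∑ i, a i| > ε}).toReal ≤
      2 * Real.exp (-(1 / 2) *
        ((n : ℝ) * ε / (3 * (∑ i, b i ^ p) ^ (1 / p))) ^ (p / (p - 1))) := by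
  classical
  have hp0 : (0:ℝ) < p := by linarith
  have hp1' : (0:ℝ) < p - 1 := by linarith
  have hprob : ∀ s : Set Ω, (volume s).toReal ≤ 1 := fun s => by
    rw [← ENNReal.toReal_one]
    exact ENNReal.toReal_mono (by simp) prob_le_one
  set Sp := ∑ i, b i ^ p with hSp
  have hSpnn : 0 ≤ Sp := Finset.sum_nonneg fun i _ => Real.rpow_nonneg (hb i) p
  by_cases hSp0 : Sp = 0
  · -- degenerate case: all bounds zero, RHS = 2
    have hB0 : Sp ^ (1/p : ℝ) = 0 := by
      rw [hSp0]; exact Real.zero_rpow (by positivity)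
    rw [hB0]
    rw [show (n:ℝ) * ε / (3 * 0) = 0 by simp]
    rw [Real.zero_rpow (by positivity)]
    refine (hprob _).trans ?_
    norm_num
  have hSppos : 0 < Sp := lt_of_le_of_ne hSpnn (Ne.symm hSp0)
  set B := Sp ^ (1/p : ℝ) with hB
  have hBpos : 0 < B := Real.rpow_pos_of_pos hSppos _
  have hBp : B ^ p = Sp := by
    rw [hB, ← Real.rpow_mul hSpnn, one_div_mul_cancel hp0.ne', Real.rpow_one]
  set r := (2 - p) / (p - 1) with hr
  have hrpos : 0 < r := div_pos (by linarith) hp1'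
  have hr2 : (0:ℝ) < r + 2 := by linarith
  set α := r / (r + 2) with hα
  have hαpos : 0 < α := div_pos hrpos hr2
  have hα1 : α < 1 := by rw [hα, div_lt_one hr2]; linarith
  have hq : p / (p - 1) = r + 2 := by rw [hr]; field_simp; ring
  set t := (n:ℝ) * ε / (3 * B) with ht
  have hnpos : (0:ℝ) < n := Nat.cast_pos.2 hn
  have htpos : 0 < t := by
    rw [ht]
    exact div_pos (mul_pos hnpos hε) (by linarith)
  have h3tB : 3 * t * B = (n:ℝ) * ε := by
    rw [ht]; field_simp
  set κ := 2 / (3 * α * t) with hκ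
  have hκpos : 0 < κ := by
    rw [hκ]
    exact div_pos two_pos (mul_pos (by linarith) htpos)
  set θ := B * κ ^ (1/(p-1) : ℝ) with hθ
  have hθpos : 0 < θ := mul_pos hBpos (Real.rpow_pos_of_pos hκpos _)
  -- the two θ identities
  have hκ1p : (κ ^ (1/(p-1) : ℝ)) ^ (1 - p) = κ⁻¹ := by
    rw [← Real.rpow_mul hκpos.le]
    rw [show (1/(p-1)) * (1 - p) = -1 by field_simp; ring]
    rw [Real.rpow_neg_one]
  have hκ2p : (κ ^ (1/(p-1) : ℝ)) ^ (2 - p) = κ ^ r := by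
    rw [← Real.rpow_mul hκpos.le]
    congr 1
    rw [hr]; field_simp
  have hθ1p : θ ^ (1 - p) * Sp = B * (3 * α * t / 2) := by
    rw [hθ, Real.mul_rpow hBpos.le (Real.rpow_nonneg hκpos.le _), hκ1p]
    rw [show B ^ (1-p:ℝ) * κ⁻¹ * Sp = (B ^ (1-p:ℝ) * Sp) * κ⁻¹ by ring]
    rw [← hBp, ← Real.rpow_add hBpos]
    rw [show (1 - p) + p = 1 by ring, Real.rpow_one, hκ]
    field_simp
  have hθ2p : θ ^ (2 - p) * Sp = B ^ 2 * κ ^ r := by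
    rw [hθ, Real.mul_rpow hBpos.le (Real.rpow_nonneg hκpos.le _), hκ2p]
    rw [show B ^ (2-p:ℝ) * κ ^ r * Sp = (B ^ (2-p:ℝ) * Sp) * κ ^ r by ring]
    rw [← hBp, ← Real.rpow_add hBpos]
    rw [show (2 - p) + p = 2 by ring, Real.rpow_two]
  set T : Finset (Fin n) := Finset.univ.filter (fun i => b i ≤ θ) with hT
  set H : Finset (Fin n) := Finset.univ.filter (fun i => ¬ (b i ≤ θ)) with hH
  -- head bound
  have hhead : ∑ i ∈ H, b i ≤ θ ^ (1 - p) * Sp := by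
    calc ∑ i ∈ H, b i ≤ ∑ i ∈ H, θ ^ (1 - p) * b i ^ p := by
          refine Finset.sum_le_sum fun i hi => ?_
          have hθb : θ ≤ b i := le_of_lt (not_le.1 (Finset.mem_filter.1 hi).2)
          have hbip : 0 < b i := lt_of_lt_of_le hθpos hθb
          calc b i = b i ^ ((1 - p) + p : ℝ) := by
                rw [show (1 - p) + p = 1 by ring, Real.rpow_one]
            _ = b i ^ (1 - p : ℝ) * b i ^ p := Real.rpow_add hbip _ _
            _ ≤ θ ^ (1 - p) * b i ^ p := by
                refine mul_le_mul_of_nonneg_right ?_ (Real.rpow_nonneg (hb i) p)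
                exact Real.rpow_le_rpow_of_nonpos hθpos hθb (by linarith)
      _ ≤ ∑ i, θ ^ (1 - p) * b i ^ p := by
          refine Finset.sum_le_sum_of_subset_of_nonneg (Finset.filter_subset _ _)
            fun i _ _ => ?_
          exact mul_nonneg (Real.rpow_nonneg hθpos.le _) (Real.rpow_nonneg (hb i) p)
      _ = θ ^ (1 - p) * Sp := by rw [hSp, Finset.mul_sum]
  -- tail variance bound
  have htail : ∑ i ∈ T, b i ^ 2 ≤ θ ^ (2 - p) * Sp := by
    calc ∑ i ∈ T, b i ^ 2 ≤ ∑ i ∈ T, θ ^ (2 - p) * b i ^ p := by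
          refine Finset.sum_le_sum fun i hi => ?_
          have hbθ : b i ≤ θ := (Finset.mem_filter.1 hi).2
          rcases eq_or_lt_of_le (hb i) with h0 | h0
          · rw [← h0]
            simp [Real.zero_rpow hp0.ne']
          · calc b i ^ 2 = b i ^ ((2 - p) + p : ℝ) := by
                  rw [show (2 - p) + p = 2 by ring, Real.rpow_two]
              _ = b i ^ (2 - p : ℝ) * b i ^ p := Real.rpow_add h0 _ _
              _ ≤ θ ^ (2 - p) * b i ^ p := by
                  refine mul_le_mul_of_nonneg_right ?_ (Real.rpow_nonneg (hb i) p)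
                  exact Real.rpow_le_rpow h0.le hbθ (by linarith)
      _ ≤ ∑ i, θ ^ (2 - p) * b i ^ p := by
          refine Finset.sum_le_sum_of_subset_of_nonneg (Finset.filter_subset _ _)
            fun i _ _ => ?_
          exact mul_nonneg (Real.rpow_nonneg hθpos.le _) (Real.rpow_nonneg (hb i) p)
      _ = θ ^ (2 - p) * Sp := by rw [hSp, Finset.mul_sum]
  set Vb := B ^ 2 * κ ^ r with hVb
  have hVbpos : 0 < Vb := by
    rw [hVb]
    exact mul_pos (pow_pos hBpos 2) (Real.rpow_pos_of_pos hκpos r)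
  have htail' : ∑ i ∈ T, b i ^ 2 ≤ Vb := hθ2p ▸ htail
  set lam := (n:ℝ) * ((1 - α) * ε) with hlam
  have hlampos : 0 < lam := by
    rw [hlam]
    exact mul_pos hnpos (mul_pos (by linarith) hε)
  -- |a i| ≤ b i, integrability
  have hZint : ∀ i, Integrable (Z i) volume := fun i => by
    refine Integrable.mono' (integrable_const (b i)) (hZmeas i).aestronglyMeasurable ?_
    filter_upwards [hbound i] with ω h using by simpa using h
  have hab : ∀ i, |a i| ≤ b i := fun i => by
    rw [ha i]
    calc |∫ ω, Z i ω| ≤ ∫ ω, |Z i ω| := by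
          simpa [Real.norm_eq_abs] using norm_integral_le_integral_norm (μ := volume) (Z i)
      _ ≤ ∫ _ω, b i := integral_mono_ae (hZint i).abs (integrable_const _) (hbound i)
      _ = b i := by simp
  -- a.s. head bound: |∑_H (Z i - a i)| ≤ n * (α * ε)
  have hheadae : ∀ᵐ ω, |∑ i ∈ H, (Z i ω - a i)| ≤ (n:ℝ) * (α * ε) := by
    filter_upwards [ae_all_iff.2 hbound] with ω hω
    calc |∑ i ∈ H, (Z i ω - a i)| ≤ ∑ i ∈ H, |Z i ω - a i| :=
          Finset.abs_sum_le_sum_abs _ _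
      _ ≤ ∑ i ∈ H, (2 * b i) := by
          refine Finset.sum_le_sum fun i _ => ?_
          calc |Z i ω - a i| ≤ |Z i ω| + |a i| := abs_sub _ _
            _ ≤ b i + b i := add_le_add (hω i) (hab i)
            _ = 2 * b i := by ring
      _ = 2 * ∑ i ∈ H, b i := by rw [Finset.mul_sum]
      _ ≤ 2 * (θ ^ (1 - p) * Sp) := by linarith [hhead]
      _ = (n:ℝ) * (α * ε) := by
          rw [hθ1p]
          have : 2 * (B * (3 * α * t / 2)) = α * (3 * t * B) := by ring
          rw [this, h3tB]; ring
  -- events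
  set SA : Set Ω := {ω | ¬ |∑ i ∈ H, (Z i ω - a i)| ≤ (n:ℝ) * (α * ε)} with hSA
  have hSA0 : volume SA = 0 := by
    rw [hSA]; exact hheadae
  set B1 : Set Ω := {ω | lam + ∑ i ∈ T, (∫ ω', Z i ω') ≤ ∑ i ∈ T, Z i ω} with hB1
  set Z' : Fin n → Ω → ℝ := fun i ω => -Z i ω with hZ'
  set B2 : Set Ω := {ω | lam + ∑ i ∈ T, (∫ ω', Z' i ω') ≤ ∑ i ∈ T, Z' i ω} with hB2
  have hIntZ' : ∀ i, (∫ ω', Z' i ω') = - a i := fun i => by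
    rw [hZ', ha i]; simp [integral_neg]
  -- inclusion
  have hsub : {ω | |(1 / (n : ℝ)) * ∑ i, Z i ω - (1 / (n : ℝ)) * ∑ i, a i| > ε} ⊆
      SA ∪ (B1 ∪ B2) := by
    intro ω hω
    simp only [Set.mem_setOf_eq] at hω
    by_cases hA : ω ∈ SA
    · exact Set.mem_union_left _ hA
    right
    have hAbound : |∑ i ∈ H, (Z i ω - a i)| ≤ (n:ℝ) * (α * ε) := not_not.1 hA
    have hsumsplit : ∑ i, (Z i ω - a i) =
        (∑ i ∈ T, (Z i ω - a i)) + (∑ i ∈ H, (Z i ω - a i)) := by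
      rw [hT, hH]
      exact (Finset.sum_filter_add_sum_filter_not Finset.univ _ _).symm
    have htotal : (n:ℝ) * ε < |∑ i, (Z i ω - a i)| := by
      have h1 : ∑ i, (Z i ω - a i) = ∑ i, Z i ω - ∑ i, a i := Finset.sum_sub_distrib _ _
      have h2 : (1 / (n : ℝ)) * ∑ i, Z i ω - (1 / (n : ℝ)) * ∑ i, a i =
          (∑ i, Z i ω - ∑ i, a i) / n := by field_simp
      rw [h2, abs_div, abs_of_pos hnpos, gt_iff_lt, lt_div_iff₀ hnpos] at hω
      rw [h1]; linarith
    have hST : lam < |∑ i ∈ T, (Z i ω - a i)| := by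
      have := abs_add_le (∑ i ∈ T, (Z i ω - a i)) (∑ i ∈ H, (Z i ω - a i))
      rw [← hsumsplit] at this
      have hle : (n:ℝ) * ε - (n:ℝ) * (α * ε) ≤ (n:ℝ) * ε - |∑ i ∈ H, (Z i ω - a i)| := by
        linarith
      rw [hlam]
      have : (n:ℝ) * ((1 - α) * ε) = (n:ℝ) * ε - (n:ℝ) * (α * ε) := by ring
      rw [this]
      linarith
    rcases lt_abs.1 hST with h | h
    · left
      rw [hB1, Set.mem_setOf_eq]
      have : ∑ i ∈ T, (∫ ω', Z i ω') = ∑ i ∈ T, a i := by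
        exact Finset.sum_congr rfl fun i _ => (ha i).symm
      rw [this]
      rw [Finset.sum_sub_distrib] at h
      linarith
    · right
      rw [hB2, Set.mem_setOf_eq]
      have h1 : ∑ i ∈ T, (∫ ω', Z' i ω') = - ∑ i ∈ T, a i := by
        rw [Finset.sum_congr rfl fun i (_ : i ∈ T) => hIntZ' i, Finset.sum_neg_distrib]
      have h2 : ∑ i ∈ T, Z' i ω = - ∑ i ∈ T, Z i ω := by
        rw [hZ']; exact Finset.sum_neg_distrib _
      rw [h1, h2]
      rw [Finset.sum_sub_distrib, neg_sub] at h
      linarith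
  -- measure bound
  have hmeas_le : (volume {ω | |(1 / (n : ℝ)) * ∑ i, Z i ω -
      (1 / (n : ℝ)) * ∑ i, a i| > ε}).toReal ≤ (volume B1).toReal + (volume B2).toReal := by
    have h1 : volume {ω | |(1 / (n : ℝ)) * ∑ i, Z i ω - (1 / (n : ℝ)) * ∑ i, a i| > ε} ≤
        volume B1 + volume B2 := by
      calc volume {ω | |(1 / (n : ℝ)) * ∑ i, Z i ω - (1 / (n : ℝ)) * ∑ i, a i| > ε}
          ≤ volume (SA ∪ (B1 ∪ B2)) := measure_mono hsub
        _ ≤ volume SA + volume (B1 ∪ B2) := measure_union_le _ _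
        _ = volume (B1 ∪ B2) := by rw [hSA0, zero_add]
        _ ≤ volume B1 + volume B2 := measure_union_le _ _
    calc (volume {ω | |(1 / (n : ℝ)) * ∑ i, Z i ω - (1 / (n : ℝ)) * ∑ i, a i| > ε}).toReal
        ≤ ((volume B1) + (volume B2)).toReal := by
          refine ENNReal.toReal_mono ?_ h1
          exact ENNReal.add_ne_top.2 ⟨measure_ne_top _ _, measure_ne_top _ _⟩
      _ = (volume B1).toReal + (volume B2).toReal :=
          ENNReal.toReal_add (measure_ne_top _ _) (measure_ne_top _ _)
  -- Hoeffding bounds on B1 and B2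
  have hHB1 : (volume B1).toReal ≤ Real.exp (-lam ^ 2 / (2 * Vb)) := by
    rw [hB1]
    exact hoeffding_one_sided Z b hb hZmeas hindep hbound T lam Vb hlampos.le htail' hVbpos
  have hindep' : iIndepFun Z' volume := by
    have := hindep.comp (fun _ => (fun x : ℝ => -x)) (fun _ => measurable_neg)
    exact this
  have hbound' : ∀ i, ∀ᵐ ω, |Z' i ω| ≤ b i := fun i => by
    filter_upwards [hbound i] with ω h using by rw [hZ']; simpa using h
  have hHB2 : (volume B2).toReal ≤ Real.exp (-lam ^ 2 / (2 * Vb)) := by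
    rw [hB2]
    exact hoeffding_one_sided Z' b hb (fun i => (hZmeas i).neg) hindep' hbound'
      T lam Vb hlampos.le htail' hVbpos
  -- final exponent comparison
  have hexp : Real.exp (-lam ^ 2 / (2 * Vb)) ≤
      Real.exp (-(1 / 2) * t ^ (p / (p - 1) : ℝ)) := by
    rw [Real.exp_le_exp]
    rw [hq]
    have hkey : (2/(3*α)) ^ (r:ℝ) ≤ 9*(1-α)^2 := by
      have hk := keyineq hrpos
      have e1 : 2/(3*α) = 2*(r+2)/(3*r) := by rw [hα]; field_simp
      have e2 : (9:ℝ)*(1-α)^2 = 36/(r+2)^2 := by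
        rw [hα]
        field_simp
        ring
      rw [e1, e2]; exact hk
    have hκt : κ * t = 2/(3*α) := by rw [hκ]; field_simp
    have htq : t ^ (r+2:ℝ) = t^(r:ℝ) * t^2 := by
      rw [Real.rpow_add htpos, Real.rpow_two]
    have hmain : t ^ (r+2:ℝ) * Vb ≤ 9*(1-α)^2 * t^2 * B^2 := by
      calc t ^ (r+2:ℝ) * Vb = (t^(r:ℝ) * κ^(r:ℝ)) * (t^2 * B^2) := by
            rw [htq, hVb]; ring
        _ = ((t*κ)^(r:ℝ)) * (t^2*B^2) := by rw [← Real.mul_rpow htpos.le hκpos.le]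
        _ = ((2/(3*α))^(r:ℝ)) * (t^2*B^2) := by rw [mul_comm t κ, hκt]
        _ ≤ 9*(1-α)^2*(t^2*B^2) :=
            mul_le_mul_of_nonneg_right hkey
              (mul_pos (pow_pos htpos 2) (pow_pos hBpos 2)).le
        _ = 9*(1-α)^2 * t^2 * B^2 := by ring
    have hlam2 : lam^2 = 9*(1-α)^2 * t^2 * B^2 := by
      have hl : lam = (1-α)*(3*t*B) := by rw [hlam, h3tB]; ring
      rw [hl]; ring
    have hfin : t ^ (r+2:ℝ) * Vb ≤ lam^2 := by rw [hlam2]; exact hmain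
    have h2vb : (0:ℝ) < 2*Vb := by linarith
    refine (div_le_iff₀ h2vb).2 ?_
    linarith [hfin]
  calc (volume {ω | |(1 / (n : ℝ)) * ∑ i, Z i ω - (1 / (n : ℝ)) * ∑ i, a i| > ε}).toReal
      ≤ (volume B1).toReal + (volume B2).toReal := hmeas_le
    _ ≤ Real.exp (-lam ^ 2 / (2 * Vb)) + Real.exp (-lam ^ 2 / (2 * Vb)) :=
        add_le_add hHB1 hHB2
    _ ≤ 2 * Real.exp (-(1 / 2) * t ^ (p / (p - 1) : ℝ)) := by
        have := hexp; linarith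
end

section
/- Let 1 < p < 2 and let Z₁,…,Zₙ be independent random variables with |Zᵢ| ≤ bᵢ almost surely, with means aᵢ = E Zᵢ and a = (1/n)∑ᵢ aᵢ. Then for every δ ∈ (0,1), with probability at least 1−δ, |(1/n)∑ᵢ₌₁ⁿ Zᵢ − a| ≤ 3·n^{−1}·(2·log(2/δ))^{1−1/p}·‖b‖_p. -/
open MeasureTheory ProbabilityTheory Finset Real

lemma hoeff_core (q : ℝ) (hq0 : 0 ≤ q) (hq1 : q ≤ 1) (u : ℝ) :
    q * Real.exp u + (1 - q) * Real.exp (-u) ≤ Real.exp ((2*q-1)*u + u^2/2) := by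
  set D : ℝ → ℝ := fun s => q * Real.exp s + (1 - q) * Real.exp (-s) with hDdef
  set N : ℝ → ℝ := fun s => q * Real.exp s - (1 - q) * Real.exp (-s) with hNdef
  have hD : ∀ s, 0 < D s := by
    intro s
    rcases hq0.eq_or_lt with h | h
    · simp [hDdef, ← h, Real.exp_pos]
    · exact add_pos_of_pos_of_nonneg (mul_pos h (Real.exp_pos s))
        (mul_nonneg (by linarith) (Real.exp_pos _).le)
  have hmul : ∀ s : ℝ, Real.exp s * Real.exp (-s) = 1 := by
    intro s; rw [← Real.exp_add]; simp
  have hDN : ∀ s, D s * D s - N s * N s = 4*q*(1-q) := by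
    intro s
    have h1 := hmul s
    simp only [hDdef, hNdef]
    nlinarith [h1]
  have hDsq : ∀ s, 4*q*(1-q) ≤ (D s)^2 := by
    intro s
    nlinarith [hDN s, sq_nonneg (N s)]
  have hDderiv : ∀ s, HasDerivAt D (N s) s := by
    intro s
    have h1 := (Real.hasDerivAt_exp s).const_mul q
    have h2 := ((Real.hasDerivAt_exp (-s)).comp s (hasDerivAt_neg s)).const_mul (1-q)
    have := h1.add h2
    refine this.congr_deriv ?_
    simp only [hNdef]
    ring
  have hNderiv : ∀ s, HasDerivAt N (D s) s := by
    intro s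
    have h1 := (Real.hasDerivAt_exp s).const_mul q
    have h2 := ((Real.hasDerivAt_exp (-s)).comp s (hasDerivAt_neg s)).const_mul (1-q)
    have := h1.sub h2
    refine this.congr_deriv ?_
    simp only [hDdef]
    ring
  set g : ℝ → ℝ := fun s => s + (2*q-1) - N s / D s with hgdef
  have hg' : ∀ s, HasDerivAt g (1 - 4*q*(1-q)/(D s)^2) s := by
    intro s
    have hdiv := (hNderiv s).div (hDderiv s) (hD s).ne'
    have := ((hasDerivAt_id s).add_const (2*q-1)).sub hdiv
    refine this.congr_deriv ?_
    rw [hDN s]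
  have hgdiff : Differentiable ℝ g := fun s => (hg' s).differentiableAt
  have hgmono : Monotone g := by
    apply monotone_of_deriv_nonneg hgdiff
    intro x
    rw [(hg' x).deriv]
    have h2 : (0:ℝ) < (D x)^2 := pow_pos (hD x) 2
    have := div_le_one_of_le₀ (hDsq x) h2.le
    linarith
  have hg0 : g 0 = 0 := by
    simp only [hgdef, hNdef, hDdef, neg_zero, Real.exp_zero]
    ring
  set h : ℝ → ℝ := fun s => s^2/2 + (2*q-1)*s - Real.log (D s) with hhdef
  have hh' : ∀ s, HasDerivAt h (g s) s := by
    intro s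
    have h1 : HasDerivAt (fun s : ℝ => s^2/2) s s := by
      have := (hasDerivAt_pow 2 s).div_const 2
      refine this.congr_deriv ?_
      ring
    have h2 := (hasDerivAt_id s).const_mul (2*q-1)
    have h3 := (hDderiv s).log (hD s).ne'
    have := (h1.add h2).sub h3
    refine this.congr_deriv ?_
    simp only [hgdef]
    ring
  have hh0 : h 0 = 0 := by
    have : D 0 = 1 := by simp [hDdef]
    simp [hhdef, this]
  have hhdiff : Differentiable ℝ h := fun s => (hh' s).differentiableAt
  have key : ∀ s, 0 ≤ h s := by
    intro s
    rcases le_total 0 s with hs | hs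
    · have hmono : MonotoneOn h (Set.Ici 0) := by
        apply monotoneOn_of_deriv_nonneg (convex_Ici 0) hhdiff.continuous.continuousOn
          (fun x _ => (hhdiff x).differentiableWithinAt)
        intro x hx
        rw [interior_Ici] at hx
        rw [(hh' x).deriv]
        calc (0:ℝ) = g 0 := hg0.symm
        _ ≤ g x := hgmono hx.le
      have := hmono (Set.self_mem_Ici) (Set.mem_Ici.2 hs) hs
      linarith [hh0 ▸ this]
    · have hanti : AntitoneOn h (Set.Iic 0) := by
        apply antitoneOn_of_deriv_nonpos (convex_Iic 0) hhdiff.continuous.continuousOn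
          (fun x _ => (hhdiff x).differentiableWithinAt)
        intro x hx
        rw [interior_Iic] at hx
        rw [(hh' x).deriv]
        calc g x ≤ g 0 := hgmono hx.le
        _ = 0 := hg0
      have := hanti (Set.mem_Iic.2 hs) (Set.self_mem_Iic) hs
      linarith [hh0 ▸ this]
  have := key u
  have hlog : Real.log (D u) ≤ (2*q-1)*u + u^2/2 := by
    simp only [hhdef] at this; linarith
  have := (Real.log_le_iff_le_exp (hD u)).mp hlog
  simpa [hDdef] using this

lemma mgf_bound {Ω : Type*} [MeasurableSpace Ω] (μ : Measure Ω) [IsProbabilityMeasure μ]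
    (X : Ω → ℝ) (hX : Measurable X) (b : ℝ) (hb : 0 ≤ b)
    (h : ∀ᵐ ω ∂μ, |X ω| ≤ b) (s : ℝ) :
    ∫ ω, Real.exp (s * X ω) ∂μ ≤ Real.exp (s * (∫ ω, X ω ∂μ) + s^2 * b^2 / 2) := by
  have hXint : Integrable X μ := by
    refine Integrable.mono' (integrable_const b) hX.aestronglyMeasurable ?_
    simpa [Real.norm_eq_abs] using h
  set m : ℝ := ∫ ω, X ω ∂μ with hmdef
  have hm : |m| ≤ b := by
    have := norm_integral_le_of_norm_le_const (C := b) (by simpa [Real.norm_eq_abs] using h) (μ := μ) (f := X)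
    simpa [hmdef, Real.norm_eq_abs] using this
  rcases hb.eq_or_lt with hb0 | hb0
  · have hX0 : X =ᵐ[μ] 0 := by
      filter_upwards [h] with ω hω
      simp only [Pi.zero_apply]
      rw [← hb0] at hω
      exact abs_nonpos_iff.mp hω
    have hm0 : m = 0 := by
      rw [hmdef, integral_congr_ae hX0]; simp
    have : (fun ω => Real.exp (s * X ω)) =ᵐ[μ] fun _ => (1:ℝ) := by
      filter_upwards [hX0] with ω hω
      simp [hω]
    rw [integral_congr_ae this, hm0, ← hb0]
    simp
  · set q : ℝ := (b + m)/(2*b) with hqdef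
    have hq0 : 0 ≤ q := by
      apply div_nonneg _ (by linarith)
      have := (abs_le.mp hm).1; linarith
    have hq1 : q ≤ 1 := by
      rw [div_le_one (by linarith)]
      have := (abs_le.mp hm).2; linarith
    have hptwise : ∀ᵐ ω ∂μ, Real.exp (s * X ω) ≤
        (b - X ω)/(2*b) * Real.exp (-(s*b)) + (b + X ω)/(2*b) * Real.exp (s*b) := by
      filter_upwards [h] with ω hω
      have h1 : (0:ℝ) ≤ (b - X ω)/(2*b) := by
        apply div_nonneg _ (by linarith)
        have := (abs_le.mp hω).2; linarith
      have h2 : (0:ℝ) ≤ (b + X ω)/(2*b) := by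
        apply div_nonneg _ (by linarith)
        have := (abs_le.mp hω).1; linarith
      have h3 : (b - X ω)/(2*b) + (b + X ω)/(2*b) = 1 := by
        field_simp; ring
      have := convexOn_exp.2 (Set.mem_univ (-(s*b))) (Set.mem_univ (s*b)) h1 h2 h3
      simp only [smul_eq_mul] at this
      have heq : (b - X ω)/(2*b) * (-(s*b)) + (b + X ω)/(2*b) * (s*b) = s * X ω := by
        field_simp; ring
      rwa [heq] at this
    have hintL : Integrable (fun ω => Real.exp (s * X ω)) μ := by
      refine Integrable.mono' (integrable_const (Real.exp (|s| * b)))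
        ((hX.const_mul s).exp.aestronglyMeasurable) ?_
      filter_upwards [h] with ω hω
      rw [Real.norm_eq_abs, abs_of_pos (Real.exp_pos _), Real.exp_le_exp]
      calc s * X ω ≤ |s * X ω| := le_abs_self _
      _ = |s| * |X ω| := abs_mul _ _
      _ ≤ |s| * b := mul_le_mul_of_nonneg_left hω (abs_nonneg s)
    have hint1 : Integrable (fun ω => (b - X ω)/(2*b) * Real.exp (-(s*b))) μ :=
      (((integrable_const b).sub hXint).div_const (2*b)).mul_const _
    have hint2 : Integrable (fun ω => (b + X ω)/(2*b) * Real.exp (s*b)) μ :=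
      (((integrable_const b).add hXint).div_const (2*b)).mul_const _
    have hmono := integral_mono_ae hintL (hint1.add hint2) hptwise
    have hR : ∫ ω, ((b - X ω)/(2*b) * Real.exp (-(s*b)) + (b + X ω)/(2*b) * Real.exp (s*b)) ∂μ
        = (1 - q) * Real.exp (-(s*b)) + q * Real.exp (s*b) := by
      rw [integral_add hint1 hint2, integral_mul_const, integral_mul_const]
      congr 2
      · rw [integral_div, integral_sub (integrable_const b) hXint, integral_const]
        simp only [measure_univ, probReal_univ, smul_eq_mul, one_mul]
        rw [hqdef]
        field_simp
        ring
      · rw [integral_div, integral_add (integrable_const b) hXint, integral_const]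
        simp only [measure_univ, probReal_univ, smul_eq_mul, one_mul]
        rw [hqdef, hmdef]
    have hcore := hoeff_core q hq0 hq1 (s*b)
    have hfinal : (1 - q) * Real.exp (-(s*b)) + q * Real.exp (s*b) ≤
        Real.exp (s * m + s^2 * b^2 / 2) := by
      have heq : (2*q - 1) * (s*b) + (s*b)^2/2 = s * m + s^2 * b^2/2 := by
        rw [hqdef]; field_simp; ring
      calc (1 - q) * Real.exp (-(s*b)) + q * Real.exp (s*b)
          = q * Real.exp (s*b) + (1 - q) * Real.exp (-(s*b)) := by ring
      _ ≤ Real.exp ((2*q-1)*(s*b) + (s*b)^2/2) := hcore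
      _ = Real.exp (s * m + s^2 * b^2/2) := by rw [heq]
    calc ∫ ω, Real.exp (s * X ω) ∂μ ≤ _ := hmono
    _ = (1 - q) * Real.exp (-(s*b)) + q * Real.exp (s*b) := hR
    _ ≤ _ := hfinal

/-- Confidence form of the ℓ_p Hoeffding-type inequality: for `1 < p < 2`,
independent `Zᵢ` with `|Zᵢ| ≤ bᵢ` a.s., for every `δ ∈ (0,1)`, with probability
at least `1−δ`, `|(1/n)∑ Zᵢ − a| ≤ 3 n⁻¹ (2 log(2/δ))^{1−1/p} ‖b‖_p`. -/
theorem stmt3 {Ω : Type*} [MeasureSpace Ω] [IsProbabilityMeasure (volume : Measure Ω)]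
    (p : ℝ) (hp1 : 1 < p) (hp2 : p < 2) (n : ℕ) (hn : 0 < n)
    (Z : Fin n → Ω → ℝ) (b : Fin n → ℝ) (hb : ∀ i, 0 ≤ b i)
    (hZmeas : ∀ i, Measurable (Z i))
    (hindep : iIndepFun Z volume)
    (hbound : ∀ i, ∀ᵐ ω, |Z i ω| ≤ b i)
    (a : Fin n → ℝ) (ha : ∀ i, a i = ∫ ω, Z i ω)
    (δ : ℝ) (hδ0 : 0 < δ) (hδ1 : δ < 1) :
    1 - δ ≤
      (volume {ω | |(1 / (n : ℝ)) * ∑ i, Z i ω - (1 / (n : ℝ)) * ∑ i, a i| ≤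
        3 * (n : ℝ)⁻¹ * (2 * Real.log (2 / δ)) ^ (1 - 1 / p) *
          (∑ i, b i ^ p) ^ (1 / p)}).toReal := by
  classical
  have hp0 : 0 < p := by linarith
  have hpne : p ≠ 0 := hp0.ne'
  set L : ℝ := Real.log (2 / δ) with hLdef
  have hL0 : 0 < L := Real.log_pos (by rw [lt_div_iff₀ hδ0]; linarith)
  set c : ℝ := 2 * L with hcdef
  have hc : 0 < c := by positivity
  set S : ℝ := (∑ i, b i ^ p) ^ (1 / p) with hSdef
  have hsum_nonneg : 0 ≤ ∑ i, b i ^ p :=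
    Finset.sum_nonneg fun i _ => Real.rpow_nonneg (hb i) p
  have hS0 : 0 ≤ S := Real.rpow_nonneg hsum_nonneg _
  have hSp : S ^ p = ∑ i, b i ^ p := by
    rw [hSdef, ← Real.rpow_mul hsum_nonneg]
    rw [one_div_mul_cancel hpne, Real.rpow_one]
  set E : Set Ω := {ω | |(1 / (n : ℝ)) * ∑ i, Z i ω - (1 / (n : ℝ)) * ∑ i, a i| ≤
        3 * (n : ℝ)⁻¹ * c ^ (1 - 1 / p) * S} with hEdef
  have hEmeas : MeasurableSet E := by
    apply measurableSet_le _ measurable_const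
    exact ((measurable_const.mul (Finset.measurable_sum _ fun i _ => hZmeas i)).sub
      measurable_const).abs
  rcases hS0.eq_or_lt with hSzero | hSpos
  · -- degenerate case: S = 0, so all b i = 0
    have hsum0 : ∑ i, b i ^ p = 0 := by
      by_contra hne
      have hpos : 0 < ∑ i, b i ^ p := lt_of_le_of_ne hsum_nonneg (Ne.symm hne)
      have h2 := Real.rpow_pos_of_pos hpos (1/p)
      rw [← hSdef, ← hSzero] at h2
      exact lt_irrefl _ h2
    have hb0 : ∀ i, b i = 0 := by
      intro i
      have h1 : b i ^ p = 0 :=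
        (Finset.sum_eq_zero_iff_of_nonneg
          (fun j _ => Real.rpow_nonneg (hb j) p)).mp hsum0 i (Finset.mem_univ i)
      exact ((Real.rpow_eq_zero_iff_of_nonneg (hb i)).mp h1).1
    have hZ0 : ∀ᵐ ω, ∀ i, Z i ω = 0 := by
      rw [ae_all_iff]
      intro i
      filter_upwards [hbound i] with ω hω
      have : |Z i ω| ≤ 0 := by rw [← hb0 i]; exact hω
      exact abs_nonpos_iff.mp this
    have ha0 : ∀ i, a i = 0 := by
      intro i
      rw [ha i]
      have hZa : Z i =ᵐ[volume] 0 := by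
        filter_upwards [hZ0] with ω hω; exact hω i
      rw [integral_congr_ae hZa]; simp
    have hfull : ∀ᵐ ω, ω ∈ E := by
      filter_upwards [hZ0] with ω hω
      simp only [hEdef, Set.mem_setOf_eq]
      have h1 : ∑ i, Z i ω = 0 := Finset.sum_eq_zero fun i _ => hω i
      have h2 : ∑ i, a i = (0:ℝ) := Finset.sum_eq_zero fun i _ => ha0 i
      rw [h1, h2, ← hSzero]
      simp
    have hE1 : volume E = 1 := by
      refine le_antisymm prob_le_one ?_
      calc (1:ENNReal) = volume Set.univ := measure_univ.symm
      _ ≤ volume E := by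
          apply measure_mono_ae
          filter_upwards [hfull] with ω hω
          exact fun _ => hω
    rw [hE1, ENNReal.toReal_one]
    linarith
  · -- main case
    set M : ℝ := c ^ (1 - 1/p) * S with hMdef
    have hM : 0 < M := mul_pos (Real.rpow_pos_of_pos hc _) hSpos
    set τ : ℝ := S * c ^ (-(1/p)) with hτdef
    have hτpos : 0 < τ := mul_pos hSpos (Real.rpow_pos_of_pos hc _)
    set I : Finset (Fin n) := Finset.univ.filter (fun i => τ < b i) with hIdef
    set J : Finset (Fin n) := Finset.univ.filter (fun i => ¬ τ < b i) with hJdef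
    set Y : Fin n → Ω → ℝ := fun i ω => Z i ω - a i with hYdef
    have hYmeas : ∀ i, Measurable (Y i) := fun i => (hZmeas i).sub measurable_const
    have hYindep : iIndepFun Y volume :=
      hindep.comp (fun i (x : ℝ) => x - a i) (fun i => measurable_id.sub measurable_const)
    have ha_abs : ∀ i, |a i| ≤ b i := by
      intro i
      rw [ha i]
      have := norm_integral_le_of_norm_le_const (μ := volume) (f := Z i) (C := b i)
        (by simpa [Real.norm_eq_abs] using hbound i)
      simpa [Real.norm_eq_abs] using this
    have hYbound : ∀ i, ∀ᵐ ω, |Y i ω| ≤ 2 * b i := by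
      intro i
      filter_upwards [hbound i] with ω hω
      calc |Y i ω| = |Z i ω - a i| := rfl
      _ ≤ |Z i ω| + |a i| := abs_sub _ _
      _ ≤ b i + b i := add_le_add hω (ha_abs i)
      _ = 2 * b i := by ring
    have hYint : ∀ (s : ℝ) i, Integrable (fun ω => Real.exp (s * Y i ω)) := by
      intro s i
      refine Integrable.mono' (integrable_const (Real.exp (|s| * (2 * b i))))
        (((hYmeas i).const_mul s).exp.aestronglyMeasurable) ?_
      filter_upwards [hYbound i] with ω hω
      rw [Real.norm_eq_abs, abs_of_pos (Real.exp_pos _), Real.exp_le_exp]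
      calc s * Y i ω ≤ |s * Y i ω| := le_abs_self _
      _ = |s| * |Y i ω| := abs_mul _ _
      _ ≤ |s| * (2 * b i) := mul_le_mul_of_nonneg_left hω (abs_nonneg s)
    have hmgfY : ∀ (s : ℝ) i, mgf (Y i) volume s ≤ Real.exp (s^2 * (b i)^2 / 2) := by
      intro s i
      have hbd := mgf_bound volume (Z i) (hZmeas i) (b i) (hb i) (hbound i) s
      rw [← ha i] at hbd
      have hkey : (fun ω => Real.exp (s * Y i ω)) =
          fun ω => Real.exp (-(s * a i)) * Real.exp (s * Z i ω) := by
        funext ω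
        rw [← Real.exp_add]
        congr 1
        simp only [hYdef]
        ring
      have hmgf_eq : mgf (Y i) volume s
          = Real.exp (-(s * a i)) * ∫ ω, Real.exp (s * Z i ω) := by
        simp only [mgf]
        rw [hkey, integral_const_mul]
      rw [hmgf_eq]
      calc Real.exp (-(s * a i)) * ∫ ω, Real.exp (s * Z i ω)
          ≤ Real.exp (-(s * a i)) * Real.exp (s * a i + s^2 * (b i)^2 / 2) :=
            mul_le_mul_of_nonneg_left hbd (Real.exp_pos _).le
      _ = Real.exp (s^2 * (b i)^2 / 2) := by
          rw [← Real.exp_add]; congr 1; ring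
    set V : ℝ := ∑ i ∈ J, (b i)^2 with hVdef
    have hmgfW : ∀ s : ℝ, mgf (∑ i ∈ J, Y i) volume s ≤ Real.exp (s^2 * V / 2) := by
      intro s
      rw [hYindep.mgf_sum hYmeas J]
      calc ∏ i ∈ J, mgf (Y i) volume s ≤ ∏ i ∈ J, Real.exp (s^2 * (b i)^2 / 2) :=
        Finset.prod_le_prod (fun i _ => mgf_nonneg) (fun i _ => hmgfY s i)
      _ = Real.exp (∑ i ∈ J, s^2 * (b i)^2 / 2) := (Real.exp_sum _ _).symm
      _ = Real.exp (s^2 * V / 2) := by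
          congr 1
          rw [hVdef, Finset.mul_sum, Finset.sum_div]
    set V₀ : ℝ := S^2 * c^(1 - 2/p) with hV₀def
    have hV₀pos : 0 < V₀ := mul_pos (pow_pos hSpos 2) (Real.rpow_pos_of_pos hc _)
    have hV : V ≤ V₀ := by
      have hterm : ∀ i ∈ J, (b i)^2 ≤ τ^(2-p) * b i ^ p := by
        intro i hi
        have hbiτ : b i ≤ τ := by
          rw [hJdef] at hi
          exact not_lt.mp (Finset.mem_filter.mp hi).2
        rcases (hb i).eq_or_lt with h0 | h0
        · rw [← h0, Real.zero_rpow hpne]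
          norm_num
        · have e1 : (b i)^2 = b i ^ (2-p) * b i ^ p := by
            rw [← Real.rpow_add h0, ← Real.rpow_natCast (b i) 2]
            norm_num
          rw [e1]
          apply mul_le_mul_of_nonneg_right _ (Real.rpow_nonneg (hb i) p)
          exact Real.rpow_le_rpow (hb i) hbiτ (by linarith)
      calc V ≤ ∑ i ∈ J, τ^(2-p) * b i ^ p := Finset.sum_le_sum hterm
      _ = τ^(2-p) * ∑ i ∈ J, b i ^ p := by rw [Finset.mul_sum]
      _ ≤ τ^(2-p) * ∑ i, b i ^ p := by
          apply mul_le_mul_of_nonneg_left _ (Real.rpow_nonneg hτpos.le _)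
          apply Finset.sum_le_sum_of_subset_of_nonneg (Finset.filter_subset _ _)
          exact fun i _ _ => Real.rpow_nonneg (hb i) p
      _ = τ^(2-p) * S^p := by rw [hSp]
      _ = V₀ := by
          rw [hτdef, Real.mul_rpow hSpos.le (Real.rpow_nonneg hc.le _),
            ← Real.rpow_mul hc.le]
          rw [mul_assoc, mul_comm (c ^ (-(1/p) * (2-p))) (S^p), ← mul_assoc,
            ← Real.rpow_add hSpos, hV₀def]
          congr 1
          · rw [show (2 - p + p : ℝ) = ((2:ℕ):ℝ) by push_cast; ring, Real.rpow_natCast]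
          · congr 1
            field_simp
            ring
    have hsumI : ∑ i ∈ I, b i ≤ M := by
      have hterm : ∀ i ∈ I, b i ≤ τ^(1-p) * b i ^ p := by
        intro i hi
        have hτbi : τ ≤ b i := by
          rw [hIdef] at hi
          exact (Finset.mem_filter.mp hi).2.le
        have hbi : 0 < b i := lt_of_lt_of_le hτpos hτbi
        have e1 : b i = b i ^ (1-p) * b i ^ p := by
          rw [← Real.rpow_add hbi]
          norm_num
        calc b i = b i ^ (1-p) * b i ^ p := e1
        _ ≤ τ^(1-p) * b i ^ p :=
            mul_le_mul_of_nonneg_right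
              (Real.rpow_le_rpow_of_nonpos hτpos hτbi (by linarith))
              (Real.rpow_nonneg (hb i) p)
      calc ∑ i ∈ I, b i ≤ ∑ i ∈ I, τ^(1-p) * b i ^ p := Finset.sum_le_sum hterm
      _ = τ^(1-p) * ∑ i ∈ I, b i ^ p := by rw [Finset.mul_sum]
      _ ≤ τ^(1-p) * ∑ i, b i ^ p := by
          apply mul_le_mul_of_nonneg_left _ (Real.rpow_nonneg hτpos.le _)
          apply Finset.sum_le_sum_of_subset_of_nonneg (Finset.filter_subset _ _)
          exact fun i _ _ => Real.rpow_nonneg (hb i) p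
      _ = τ^(1-p) * S^p := by rw [hSp]
      _ = M := by
          rw [hτdef, Real.mul_rpow hSpos.le (Real.rpow_nonneg hc.le _),
            ← Real.rpow_mul hc.le]
          rw [mul_assoc, mul_comm (c ^ (-(1/p) * (1-p))) (S^p), ← mul_assoc,
            ← Real.rpow_add hSpos, hMdef, mul_comm (c ^ (1 - 1/p)) S]
          congr 1
          · rw [show (1 - p + p : ℝ) = (1:ℝ) by ring, Real.rpow_one]
          · congr 1
            field_simp
            ring
    set s₀ : ℝ := c^(1/p) / S with hs₀def
    have hs₀pos : 0 < s₀ := div_pos (Real.rpow_pos_of_pos hc _) hSpos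
    have idA : s₀ * M = c := by
      rw [hs₀def, hMdef, div_mul_eq_mul_div, ← mul_assoc, ← Real.rpow_add hc,
        show (1/p + (1 - 1/p)) = (1:ℝ) by ring, Real.rpow_one, mul_div_assoc,
        div_self hSpos.ne', mul_one]
    have idB : s₀^2 * V₀ = c := by
      have e1 : s₀^2 = c^(2/p) / S^2 := by
        rw [hs₀def, div_pow]
        congr 1
        rw [← Real.rpow_natCast (c^(1/p)) 2, ← Real.rpow_mul hc.le]
        congr 1
        push_cast
        ring
      have e2 : c^(2/p) * c^(1-2/p) = c := by
        rw [← Real.rpow_add hc, show (2/p + (1-2/p)) = (1:ℝ) by ring, Real.rpow_one]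
      rw [e1, hV₀def, div_mul_eq_mul_div,
        show c^(2/p) * (S^2*c^(1-2/p)) = (c^(2/p)*c^(1-2/p))*S^2 from by ring, e2,
        mul_div_assoc, div_self (pow_ne_zero 2 hSpos.ne'), mul_one]
    have idExp : -(s₀*M) + s₀^2*V₀/2 = -L := by
      rw [idA, idB, hcdef]
      ring
    have hintW : ∀ s : ℝ, Integrable (fun ω => Real.exp (s * (∑ i ∈ J, Y i) ω)) :=
      fun s => hYindep.integrable_exp_mul_sum hYmeas (fun i _ => hYint s i)
    have hδ2 : Real.exp (-L) = δ/2 := by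
      rw [hLdef, Real.exp_neg, Real.exp_log (by positivity), inv_div]
    have htail1 : (volume {ω | M ≤ (∑ i ∈ J, Y i) ω}).toReal ≤ δ/2 := by
      calc (volume {ω | M ≤ (∑ i ∈ J, Y i) ω}).toReal
          ≤ Real.exp (-s₀ * M) * mgf (∑ i ∈ J, Y i) volume s₀ :=
        measure_ge_le_exp_mul_mgf M hs₀pos.le (hintW s₀)
      _ ≤ Real.exp (-s₀ * M) * Real.exp (s₀^2 * V / 2) :=
        mul_le_mul_of_nonneg_left (hmgfW s₀) (Real.exp_pos _).le
      _ ≤ Real.exp (-s₀ * M) * Real.exp (s₀^2 * V₀ / 2) := by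
        apply mul_le_mul_of_nonneg_left _ (Real.exp_pos _).le
        rw [Real.exp_le_exp]
        nlinarith [sq_nonneg s₀]
      _ = Real.exp (-(s₀*M) + s₀^2*V₀/2) := by rw [← Real.exp_add, neg_mul]
      _ = Real.exp (-L) := by rw [idExp]
      _ = δ/2 := hδ2
    have htail2 : (volume {ω | (∑ i ∈ J, Y i) ω ≤ -M}).toReal ≤ δ/2 := by
      calc (volume {ω | (∑ i ∈ J, Y i) ω ≤ -M}).toReal
          ≤ Real.exp (-(-s₀) * -M) * mgf (∑ i ∈ J, Y i) volume (-s₀) :=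
        measure_le_le_exp_mul_mgf (-M) (by linarith) (hintW (-s₀))
      _ ≤ Real.exp (-(-s₀) * -M) * Real.exp ((-s₀)^2 * V / 2) :=
        mul_le_mul_of_nonneg_left (hmgfW (-s₀)) (Real.exp_pos _).le
      _ ≤ Real.exp (-(-s₀) * -M) * Real.exp (s₀^2 * V₀ / 2) := by
        apply mul_le_mul_of_nonneg_left _ (Real.exp_pos _).le
        rw [Real.exp_le_exp, show ((-s₀)^2 : ℝ) = s₀^2 by ring]
        nlinarith [sq_nonneg s₀]
      _ = Real.exp (-(s₀*M) + s₀^2*V₀/2) := by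
        rw [← Real.exp_add]
        congr 1
        ring
      _ = Real.exp (-L) := by rw [idExp]
      _ = δ/2 := hδ2
    have hbigae : ∀ᵐ ω, |∑ i ∈ I, Y i ω| ≤ 2*M := by
      have hall : ∀ᵐ ω, ∀ i, |Z i ω| ≤ b i := ae_all_iff.mpr hbound
      filter_upwards [hall] with ω hω
      calc |∑ i ∈ I, Y i ω| ≤ ∑ i ∈ I, |Y i ω| := Finset.abs_sum_le_sum_abs _ _
      _ ≤ ∑ i ∈ I, 2 * b i := Finset.sum_le_sum (fun i _ => by
          calc |Y i ω| = |Z i ω - a i| := rfl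
          _ ≤ |Z i ω| + |a i| := abs_sub _ _
          _ ≤ b i + b i := add_le_add (hω i) (ha_abs i)
          _ = 2 * b i := by ring)
      _ = 2 * ∑ i ∈ I, b i := by rw [Finset.mul_sum]
      _ ≤ 2*M := by linarith [hsumI]
    have hsub : Eᶜ ≤ᵐ[volume]
        ({ω | M ≤ (∑ i ∈ J, Y i) ω} ∪ {ω | (∑ i ∈ J, Y i) ω ≤ -M} : Set Ω) := by
      filter_upwards [hbigae] with ω hbig
      intro hωE
      rcases le_or_gt M ((∑ i ∈ J, Y i) ω) with hc1 | hc1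
      · exact Or.inl hc1
      rcases le_or_gt ((∑ i ∈ J, Y i) ω) (-M) with hc2 | hc2
      · exact Or.inr hc2
      exfalso
      apply hωE
      have hJle : |(∑ i ∈ J, Y i) ω| ≤ M := abs_le.mpr ⟨hc2.le, hc1.le⟩
      have happ : (∑ i ∈ J, Y i) ω = ∑ i ∈ J, Y i ω := Finset.sum_apply _ _ _
      have hsplit0 : (∑ i ∈ I, Y i ω) + (∑ i ∈ J, Y i ω) = ∑ i, Y i ω := by
        rw [hIdef, hJdef]
        exact Finset.sum_filter_add_sum_filter_not Finset.univ _ _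
      have hsumdiff : ∑ i, Y i ω = ∑ i, Z i ω - ∑ i, a i := by
        simp only [hYdef]
        exact Finset.sum_sub_distrib _ _
      have h1n : (0:ℝ) < (n:ℝ) := Nat.cast_pos.mpr hn
      show ω ∈ E
      simp only [hEdef, Set.mem_setOf_eq]
      have habs : |1/(n:ℝ) * ∑ i, Z i ω - 1/(n:ℝ) * ∑ i, a i|
          = 1/(n:ℝ) * |∑ i, Z i ω - ∑ i, a i| := by
        rw [← mul_sub, abs_mul, abs_of_pos (by positivity : (0:ℝ) < 1/(n:ℝ))]
      rw [habs, ← hsumdiff, ← hsplit0]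
      calc 1/(n:ℝ) * |(∑ i ∈ I, Y i ω) + ∑ i ∈ J, Y i ω|
          ≤ 1/(n:ℝ) * (2*M + M) := by
            apply mul_le_mul_of_nonneg_left _ (by positivity)
            calc |(∑ i ∈ I, Y i ω) + ∑ i ∈ J, Y i ω|
                ≤ |∑ i ∈ I, Y i ω| + |∑ i ∈ J, Y i ω| := abs_add_le _ _
            _ ≤ 2*M + M := by rw [happ] at hJle; exact add_le_add hbig hJle
      _ = 3 * (n:ℝ)⁻¹ * c^(1-1/p) * S := by
          rw [hMdef]
          ring
    have hEc : (volume Eᶜ).toReal ≤ δ := by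
      have h1 : volume Eᶜ ≤ volume ({ω | M ≤ (∑ i ∈ J, Y i) ω}
          ∪ {ω | (∑ i ∈ J, Y i) ω ≤ -M} : Set Ω) := measure_mono_ae hsub
      have h2 := measure_union_le (μ := volume) {ω | M ≤ (∑ i ∈ J, Y i) ω}
          {ω | (∑ i ∈ J, Y i) ω ≤ -M}
      have h3 := ENNReal.toReal_mono
        (ENNReal.add_ne_top.mpr ⟨measure_ne_top _ _, measure_ne_top _ _⟩) (h1.trans h2)
      rw [ENNReal.toReal_add (measure_ne_top _ _) (measure_ne_top _ _)] at h3
      linarith [htail1, htail2, h3]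
    have hsum1 : (volume E).toReal + (volume Eᶜ).toReal = 1 := by
      rw [← ENNReal.toReal_add (measure_ne_top _ _) (measure_ne_top _ _),
        measure_add_measure_compl hEmeas]
      simp
    linarith
end
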